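/- Double robustness of ψ under a correct extended propensity score (first half of the proof of Proposition 4). Under the above setup, for every bounded measurable g and every bounded measurable function m* of (Z, C) (an arbitrary, possibly misspecified, outcome-regression function), E[ (1−A) · ( π/(1−π) ) · ( g(Y₀, C) − m*(Z, C) ) + A · m*(Z, C) ] = E[ A · g(Y₀, C) ]. -/

import Mathlib

open MeasureTheory

/-- Double robustness of `ψ` under a correct extended propensity score: with `π`
a version of `E[A | σ(Y₀, Z, C)]` with `π < 1` a.s., for every bounded
measurable `g` and every bounded measurable (possibly misspecified)
outcome-regression function `m*` of `(Z, C)`,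
`E[(1-A) (π/(1-π)) (g(Y₀,C) - m*(Z,C)) + A m*(Z,C)] = E[A g(Y₀,C)]`. -/
theorem dr_correct_propensity
    {Ω : Type*} {mΩ : MeasurableSpace Ω} (P : Measure Ω) [IsProbabilityMeasure P]
    {𝒵 𝒞 : Type*} [MeasurableSpace 𝒵] [MeasurableSpace 𝒞]
    (A Y₀ π : Ω → ℝ) (Z : Ω → 𝒵) (C : Ω → 𝒞)
    (hA : Measurable A) (hY₀ : Measurable Y₀)
    (hZ : Measurable Z) (hC : Measurable C)
    (hAval : ∀ ω, A ω = 0 ∨ A ω = 1)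
    (𝒢 : MeasurableSpace Ω)
    (h𝒢 : 𝒢 = MeasurableSpace.comap Y₀ inferInstance ⊔
              MeasurableSpace.comap Z inferInstance ⊔
              MeasurableSpace.comap C inferInstance)
    (h𝒢le : 𝒢 ≤ mΩ)
    (hπ : π =ᵐ[P] P[A | 𝒢])
    (hπlt : ∀ᵐ ω ∂P, π ω < 1) :
    ∀ (g : ℝ × 𝒞 → ℝ) (m : 𝒵 × 𝒞 → ℝ), Measurable g → Measurable m →
      (∃ M, ∀ x, |g x| ≤ M) → (∃ M, ∀ x, |m x| ≤ M) →
      Integrable (fun ω => (1 - A ω) * (π ω / (1 - π ω)) *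
          (g (Y₀ ω, C ω) - m (Z ω, C ω)) + A ω * m (Z ω, C ω)) P →
      ∫ ω, ((1 - A ω) * (π ω / (1 - π ω)) * (g (Y₀ ω, C ω) - m (Z ω, C ω))
            + A ω * m (Z ω, C ω)) ∂P
        = ∫ ω, A ω * g (Y₀ ω, C ω) ∂P := by
  rintro g m hg hm ⟨Mg, hMg⟩ ⟨Mm, hMm⟩ hInt
  set q : Ω → ℝ := P[A | 𝒢] with hqdef
  -- measurability wrt 𝒢
  have hY𝒢 : @Measurable Ω ℝ 𝒢 _ Y₀ := by
    refine Measurable.mono (measurable_iff_comap_le.2 le_rfl) ?_ le_rfl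
    rw [h𝒢]; exact le_trans le_sup_left le_sup_left
  have hZ𝒢 : @Measurable Ω 𝒵 𝒢 _ Z := by
    refine Measurable.mono (measurable_iff_comap_le.2 le_rfl) ?_ le_rfl
    rw [h𝒢]; exact le_trans le_sup_right le_sup_left
  have hC𝒢 : @Measurable Ω 𝒞 𝒢 _ C := by
    refine Measurable.mono (measurable_iff_comap_le.2 le_rfl) ?_ le_rfl
    rw [h𝒢]; exact le_sup_right
  set h : Ω → ℝ := fun ω => g (Y₀ ω, C ω) - m (Z ω, C ω) with hhdef
  have hh𝒢m : @Measurable Ω ℝ 𝒢 _ h :=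
    ((hg.comp (hY𝒢.prodMk hC𝒢)).sub (hm.comp (hZ𝒢.prodMk hC𝒢)))
  have hh𝒢 : StronglyMeasurable[𝒢] h := hh𝒢m.stronglyMeasurable
  have hhmeas : @Measurable Ω ℝ mΩ _ h :=
    ((hg.comp ((hY₀.prodMk hC))).sub (hm.comp (hZ.prodMk hC)))
  have hhbd : ∀ ω, |h ω| ≤ Mg + Mm := fun ω =>
    (abs_sub _ _).trans (add_le_add (hMg _) (hMm _))
  -- basic integrability
  have intA : Integrable A P := by
    refine (MemLp.of_bound hA.aestronglyMeasurable 1 ?_).integrable le_rfl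
    filter_upwards with ω
    rcases hAval ω with hv | hv <;> simp [hv, Real.norm_eq_abs]
  have intAm : Integrable (fun ω => A ω * m (Z ω, C ω)) P := by
    refine (MemLp.of_bound ((hA.mul (hm.comp (hZ.prodMk hC))).aestronglyMeasurable)
      (1 * |Mm|) ?_).integrable le_rfl
    filter_upwards with ω
    rw [Real.norm_eq_abs, Pi.mul_apply, abs_mul]
    refine mul_le_mul ?_ ((hMm _).trans (le_abs_self _)) (abs_nonneg _) zero_le_one
    rcases hAval ω with hv | hv <;> simp [hv]
  have intAh : Integrable (h * A) P := by
    refine (MemLp.of_bound ((hhmeas.mul hA).aestronglyMeasurable)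
      ((Mg + Mm) * 1) ?_).integrable le_rfl
    filter_upwards with ω
    rw [Real.norm_eq_abs, Pi.mul_apply, abs_mul]
    refine mul_le_mul (hhbd _) ?_ (abs_nonneg _) ?_
    · rcases hAval ω with hv | hv <;> simp [hv]
    · have := abs_nonneg (h ω); linarith [hhbd ω]
  have int1A : Integrable (fun ω => 1 - A ω) P := (integrable_const 1).sub intA
  -- the "f" function
  set f : Ω → ℝ := fun ω => q ω / (1 - q ω) * h ω with hfdef
  have hq𝒢m : @Measurable Ω ℝ 𝒢 _ q := stronglyMeasurable_condExp.measurable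
  have hf𝒢 : StronglyMeasurable[𝒢] f :=
    ((hq𝒢m.div (measurable_const.sub hq𝒢m)).mul hh𝒢m).stronglyMeasurable
  have hqlt : ∀ᵐ ω ∂P, q ω < 1 := by
    filter_upwards [hπ, hπlt] with ω h1 h2
    rw [← h1]; exact h2
  -- first term integrability (with π)
  have intT1π : Integrable (fun ω => (1 - A ω) * (π ω / (1 - π ω)) * h ω) P := by
    have := hInt.sub intAm
    refine this.congr (by filter_upwards with ω; simp only [Pi.sub_apply]; ring)
  have hfq_eq : (fun ω => (1 - A ω) * (π ω / (1 - π ω)) * h ω)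
      =ᵐ[P] f * (fun ω => 1 - A ω) := by
    filter_upwards [hπ] with ω hω
    simp only [hfdef, Pi.mul_apply, hω]
    ring
  have intT1 : Integrable (f * fun ω => 1 - A ω) P := intT1π.congr hfq_eq
  -- conditional expectation computations
  have hcond1A : P[(fun ω => 1 - A ω) | 𝒢] =ᵐ[P] fun ω => 1 - q ω := by
    have h1 : P[(fun (_ : Ω) => (1:ℝ)) - A | 𝒢] =ᵐ[P]
        P[(fun (_ : Ω) => (1:ℝ)) | 𝒢] - P[A | 𝒢] := condExp_sub (integrable_const 1) intA 𝒢
    have h2 : P[(fun (_ : Ω) => (1:ℝ)) | 𝒢] = fun _ => (1:ℝ) := condExp_const h𝒢le 1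
    filter_upwards [h1] with ω hω
    have : ((fun (_ : Ω) => (1:ℝ)) - A) = fun ω => 1 - A ω := rfl
    rw [← this, hω, h2]
    simp [hqdef]
  -- ∫ f * (1-A) = ∫ q * h
  have key1 : ∫ ω, (1 - A ω) * (π ω / (1 - π ω)) * h ω ∂P = ∫ ω, q ω * h ω ∂P := by
    rw [integral_congr_ae hfq_eq, ← integral_condExp h𝒢le]
    have hc := condExp_mul_of_stronglyMeasurable_left hf𝒢 intT1 int1A
    rw [integral_congr_ae hc]
    refine integral_congr_ae ?_
    filter_upwards [hcond1A, hqlt] with ω h1 h2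
    have hne : (1 : ℝ) - q ω ≠ 0 := by linarith
    simp only [Pi.mul_apply, h1, hfdef]
    rw [div_mul_eq_mul_div, div_mul_cancel₀ _ hne]
  -- ∫ h * A = ∫ q * h
  have key2 : ∫ ω, h ω * A ω ∂P = ∫ ω, q ω * h ω ∂P := by
    have : ∫ ω, h ω * A ω ∂P = ∫ ω, (h * A) ω ∂P := rfl
    rw [this, ← integral_condExp h𝒢le]
    have hc := condExp_mul_of_stronglyMeasurable_left hh𝒢 intAh intA
    rw [integral_congr_ae hc]
    refine integral_congr_ae ?_
    filter_upwards with ω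
    simp only [Pi.mul_apply, hqdef]
    ring
  -- put everything together
  have split : ∫ ω, ((1 - A ω) * (π ω / (1 - π ω)) * h ω + A ω * m (Z ω, C ω)) ∂P
      = ∫ ω, (1 - A ω) * (π ω / (1 - π ω)) * h ω ∂P
        + ∫ ω, A ω * m (Z ω, C ω) ∂P := integral_add intT1π intAm
  have splitR : ∫ ω, A ω * g (Y₀ ω, C ω) ∂P
      = ∫ ω, h ω * A ω ∂P + ∫ ω, A ω * m (Z ω, C ω) ∂P := by
    rw [← integral_add (intAh.congr (by filter_upwards with ω; rfl)) intAm]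
    refine integral_congr_ae ?_
    filter_upwards with ω
    simp only [hhdef, Pi.mul_apply]
    ring
  calc ∫ ω, ((1 - A ω) * (π ω / (1 - π ω)) * (g (Y₀ ω, C ω) - m (Z ω, C ω))
            + A ω * m (Z ω, C ω)) ∂P
      = ∫ ω, (1 - A ω) * (π ω / (1 - π ω)) * h ω ∂P
        + ∫ ω, A ω * m (Z ω, C ω) ∂P := split
    _ = ∫ ω, q ω * h ω ∂P + ∫ ω, A ω * m (Z ω, C ω) ∂P := by rw [key1]
    _ = ∫ ω, h ω * A ω ∂P + ∫ ω, A ω * m (Z ω, C ω) ∂P := by rw [key2]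
    _ = ∫ ω, A ω * g (Y₀ ω, C ω) ∂P := splitR.symm
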